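/- Let φ₁, …, φ_m be linear functionals on C₁ and let M₁ = ⋂_{j=1}^m ker(φ_j), so that M = (M₁, C₂; α₁|_{M₁}, …, α_n|_{M₁}) is a reduced submodule of C. Then the map sending the line spanned by a nonzero c ∈ C₂ to the pair (span{d(c)}, span{c}) is a bijection from the set of one-dimensional subspaces span{c} of C₂ with φ_j(d(c)) = 0 for all j = 1, …, m onto the set of bristle submodules of M (equivalently, onto the set of bristle submodules (U₁, U₂) of C with U₁ ⊆ M₁). -/

import Mathlib

/-!
The canonical bristled `n`-Kronecker module `C = (C₁, C₂; α₁, …, α_n)`: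
`C₂ = Fin n → k` with standard basis `c_i`, and `C₁ = Sym2 (Fin n) → k` with
standard basis `c_{ij}`.  `α_r` is given by `(α_r x) i = x {i, r}`, and
`d(c) = Σ_{i≤j} λ_i λ_j c_{ij}` for `c = Σ λ_i c_i`.
Given linear functionals `φ₁, …, φ_m` on `C₁`, set `M₁ = ⋂_j ker φ_j`; then
`M = (M₁, C₂; α₁|_{M₁}, …, α_n|_{M₁})` is a reduced submodule of `C`, and its
bristle submodules are exactly the bristle submodules `(U₁, U₂)` of `C` with
`U₁ ⊆ M₁`.
-/

/-- The structure map `α_r : C₁ → C₂` of the canonical bristled module. -/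
def canAlpha (k : Type*) [Field k] (n : ℕ) (r : Fin n) :
    (Sym2 (Fin n) → k) →ₗ[k] (Fin n → k) where
  toFun x i := x (Sym2.mk i r)
  map_add' _ _ := rfl
  map_smul' _ _ := rfl

/-- `d(c) = Σ_{i ≤ j} λ_i λ_j c_{ij}` for `c = Σ_i λ_i c_i`. -/
def dvec {k : Type*} [Field k] {n : ℕ} (c : Fin n → k) : Sym2 (Fin n) → k :=
  Sym2.lift ⟨fun i j => c i * c j, fun i j => mul_comm (c i) (c j)⟩

/-- A bristle submodule of the canonical bristled module: a pair of
one-dimensional subspaces `(U₁ ⊆ C₁, U₂ ⊆ C₂)` with `α_r(U₁) ⊆ U₂` for all `r`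
and `α_r(U₁) ≠ 0` for at least one `r`. -/
def IsBristleSub {k : Type*} [Field k] {n : ℕ}
    (U₁ : Submodule k (Sym2 (Fin n) → k)) (U₂ : Submodule k (Fin n → k)) : Prop :=
  (∀ r, U₁.map (canAlpha k n r) ≤ U₂) ∧
    Module.finrank k U₁ = 1 ∧ Module.finrank k U₂ = 1 ∧
    ∃ r, U₁.map (canAlpha k n r) ≠ ⊥

/-- The set of lines `span{c} ⊆ C₂` (with `c ≠ 0`) such that
`φ_j(d(c)) = 0` for all `j`. -/
def lineSet {k : Type*} [Field k] {n m : ℕ}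
    (φ : Fin m → ((Sym2 (Fin n) → k) →ₗ[k] k)) : Set (Submodule k (Fin n → k)) :=
  {L | ∃ c : Fin n → k, c ≠ 0 ∧ L = Submodule.span k {c} ∧ ∀ j, φ j (dvec c) = 0}

/-- The set of bristle submodules `(U₁, U₂)` of `C` with `U₁ ⊆ M₁ = ⋂_j ker φ_j`;
these are exactly the bristle submodules of the submodule `M` of `C`. -/
def bristleSet {k : Type*} [Field k] {n m : ℕ}
    (φ : Fin m → ((Sym2 (Fin n) → k) →ₗ[k] k)) :
    Set (Submodule k (Sym2 (Fin n) → k) × Submodule k (Fin n → k)) :=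
  {p | IsBristleSub p.1 p.2 ∧ ∀ j, p.1 ≤ LinearMap.ker (φ j)}


section Aux

open Submodule Module

variable {k : Type*} [Field k] {n : ℕ}

lemma canAlpha_apply (r : Fin n) (x : Sym2 (Fin n) → k) (i : Fin n) :
    canAlpha k n r x i = x (Sym2.mk i r) := rfl

lemma dvec_mk (c : Fin n → k) (i j : Fin n) : dvec c (Sym2.mk i j) = c i * c j := rfl

lemma dvec_ne_zero {c : Fin n → k} (hc : c ≠ 0) : dvec c ≠ 0 := by
  obtain ⟨i, hi⟩ := Function.ne_iff.mp hc
  intro h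
  apply hi
  have := congrFun h (Sym2.mk i i)
  simpa [dvec_mk, mul_self_eq_zero] using this

lemma canAlpha_dvec (r : Fin n) (c : Fin n → k) : canAlpha k n r (dvec c) = c r • c := by
  funext i
  simp [canAlpha_apply, dvec_mk, mul_comm]

lemma dvec_smul (t : k) (c : Fin n → k) : dvec (t • c) = (t * t) • dvec c := by
  funext z
  induction z using Sym2.ind with
  | _ i j =>
    simp only [dvec_mk, Pi.smul_apply, smul_eq_mul]
    ring

lemma span_dvec_eq {c c' : Fin n → k} (hc : c ≠ 0)
    (h : Submodule.span k {c} = Submodule.span k {c'}) :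
    Submodule.span k {dvec c} = Submodule.span k {dvec c'} := by
  have hmem : c ∈ Submodule.span k {c'} := h ▸ Submodule.mem_span_singleton_self c
  obtain ⟨t, rfl⟩ := Submodule.mem_span_singleton.mp hmem
  have ht : t ≠ 0 := by rintro rfl; simp at hc
  rw [dvec_smul]
  exact Submodule.span_singleton_smul_eq (IsUnit.mk0 _ (mul_ne_zero ht ht)) _

lemma exists_gen {V : Type*} [AddCommGroup V] [Module k V] {U : Submodule k V}
    (h : Module.finrank k U = 1) : ∃ v : V, v ≠ 0 ∧ U = Submodule.span k {v} := by
  have hfd : FiniteDimensional k U := .of_finrank_eq_succ h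
  have : Nontrivial U := by
    rw [← Module.finrank_pos_iff (R := k)]
    omega
  obtain ⟨v, hv⟩ := exists_ne (0 : U)
  refine ⟨(v : V), by simpa using hv, ?_⟩
  have hle : Submodule.span k {(v : V)} ≤ U := by
    rw [Submodule.span_singleton_le_iff_mem]; exact v.2
  refine (Submodule.eq_of_le_of_finrank_eq hle ?_).symm
  rw [h, finrank_span_singleton (by simpa using hv)]

end Aux

/-- With `M₁ = ⋂_j ker φ_j`, the module `M = (M₁, C₂; α_i|_{M₁})`
is a reduced submodule of `C`, and the map `span{c} ↦ (span{d(c)}, span{c})`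
is a bijection from the set of lines `span{c} ⊆ C₂` with `φ_j(d(c)) = 0` for
all `j` onto the set of bristle submodules of `M`, i.e. bristle submodules
`(U₁, U₂)` of `C` with `U₁ ⊆ M₁`. -/
theorem bristle_submodules_of_kernel_submodule
    {k : Type*} [Field k] {n m : ℕ} (hn : 1 ≤ n)
    (φ : Fin m → ((Sym2 (Fin n) → k) →ₗ[k] k)) :
    (∀ x ∈ ⨅ j, LinearMap.ker (φ j),
      (∀ r, canAlpha k n r x = 0) → x = 0) ∧
    ∃ F : lineSet φ → bristleSet φ,
      Function.Bijective F ∧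
      ∀ (c : Fin n → k) (hc : c ≠ 0) (h0 : ∀ j, φ j (dvec c) = 0),
        (F ⟨Submodule.span k {c}, ⟨c, hc, rfl, h0⟩⟩ :
            Submodule k (Sym2 (Fin n) → k) × Submodule k (Fin n → k))
          = (Submodule.span k {dvec c}, Submodule.span k {c}) := by
  classical
  constructor
  · intro x _ h
    funext z
    induction z using Sym2.ind with
    | _ i j =>
      have := congrFun (h j) i
      simpa [canAlpha_apply] using this
  · have mem_bristle : ∀ (c : Fin n → k), c ≠ 0 → (∀ j, φ j (dvec c) = 0) →
        ((Submodule.span k {dvec c}, Submodule.span k {c}) :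
          Submodule k (Sym2 (Fin n) → k) × Submodule k (Fin n → k)) ∈ bristleSet φ := by
      intro c hc h0
      refine ⟨⟨?_, ?_, ?_, ?_⟩, ?_⟩
      · intro r
        rw [Submodule.map_span, Set.image_singleton, canAlpha_dvec,
          Submodule.span_singleton_le_iff_mem]
        exact Submodule.smul_mem _ _ (Submodule.mem_span_singleton_self c)
      · exact finrank_span_singleton (dvec_ne_zero hc)
      · exact finrank_span_singleton hc
      · obtain ⟨r, hr⟩ := Function.ne_iff.mp hc
        refine ⟨r, ?_⟩
        rw [Submodule.map_span, Set.image_singleton, canAlpha_dvec, Ne,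
          Submodule.span_singleton_eq_bot]
        exact smul_ne_zero (by simpa using hr) hc
      · intro j
        rw [Submodule.span_singleton_le_iff_mem, LinearMap.mem_ker]
        exact h0 j
    have key : ∀ (L : lineSet φ) (c : Fin n → k), c ≠ 0 →
        (L : Submodule k (Fin n → k)) = Submodule.span k {c} →
        Submodule.span k {dvec L.2.choose} = Submodule.span k {dvec c} := by
      intro L c hc hLc
      obtain ⟨hc', hL', h0'⟩ := L.2.choose_spec
      exact span_dvec_eq hc' (hL'.symm.trans hLc)
    refine ⟨fun L => ⟨(Submodule.span k {dvec L.2.choose}, L.1), ?_⟩, ⟨?_, ?_⟩, ?_⟩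
    · obtain ⟨hc, hL, h0⟩ := L.2.choose_spec
      have := mem_bristle _ hc h0
      rwa [← hL] at this
    · intro L L' h
      apply Subtype.ext
      exact congrArg Prod.snd (congrArg Subtype.val h)
    · rintro ⟨p, ⟨hmap, h1, h2, r, hr⟩, hker⟩
      obtain ⟨x, hx0, hU₁⟩ := exists_gen h1
      obtain ⟨u, hu0, hU₂⟩ := exists_gen h2
      have hrx : canAlpha k n r x ≠ 0 := by
        intro h
        apply hr
        rw [hU₁, Submodule.map_span, Set.image_singleton, h]
        simp
      have hmu : ∀ s, ∃ t : k, canAlpha k n s x = t • u := by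
        intro s
        have hm : canAlpha k n s x ∈ p.2 :=
          hmap s ⟨x, by rw [hU₁]; exact Submodule.mem_span_singleton_self x, rfl⟩
        rw [hU₂, Submodule.mem_span_singleton] at hm
        obtain ⟨t, ht⟩ := hm
        exact ⟨t, ht.symm⟩
      choose μ hμ using hmu
      have hsym : ∀ i s : Fin n, μ s * u i = μ i * u s := by
        intro i s
        have e1 : x (Sym2.mk i s) = μ s * u i := congrFun (hμ s) i
        have e2 : x (Sym2.mk s i) = μ i * u s := congrFun (hμ i) s
        rw [← e1, ← e2, Sym2.eq_swap]
      have hμr : μ r ≠ 0 := by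
        intro h
        apply hrx
        rw [hμ r, h, zero_smul]
      have hur : u r ≠ 0 := by
        intro h
        apply hu0
        funext i
        have e := hsym i r
        rw [h, mul_zero] at e
        simpa [hμr] using e
      set t : k := μ r / u r with htdef
      have ht0 : t ≠ 0 := div_ne_zero hμr hur
      have hμt : ∀ i, μ i = t * u i := by
        intro i
        rw [htdef, div_mul_eq_mul_div, eq_div_iff hur]
        exact hsym r i
      have hx : x = t • dvec u := by
        funext z
        induction z using Sym2.ind with
        | _ i j =>
          have e := congrFun (hμ j) i
          rw [canAlpha_apply] at e
          rw [e, hμt j]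
          show t * u j * u i = t * dvec u (Sym2.mk i j)
          rw [dvec_mk]
          ring
      have hU₁' : p.1 = Submodule.span k {dvec u} := by
        rw [hU₁, hx]
        exact Submodule.span_singleton_smul_eq (IsUnit.mk0 _ ht0) _
      have h0 : ∀ j, φ j (dvec u) = 0 := by
        intro j
        refine hker j ?_
        rw [hU₁']
        exact Submodule.mem_span_singleton_self _
      refine ⟨⟨p.2, ⟨u, hu0, hU₂, h0⟩⟩, ?_⟩
      apply Subtype.ext
      apply Prod.ext
      · exact (key ⟨p.2, ⟨u, hu0, hU₂, h0⟩⟩ u hu0 hU₂).trans hU₁'.symm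
      · rfl
    · intro c hc h0
      apply Prod.ext
      · exact key ⟨Submodule.span k {c}, ⟨c, hc, rfl, h0⟩⟩ c hc rfl
      · rfl
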